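/- (Primal error bound for iDAPG.) Assume Assumption A' holds and the dual function φ is μφ-strongly convex with μφ > 0; set κφ = (σmax(B)²/μx + Ly)/μφ and β = (√κφ − 1)/(√κφ + 1). Let (x*, y*) be a saddle point of L(x,y) = f1(x) + f2(x) + yᵀBx − g1(y) − g2(y). Suppose z^k = y^k + β(y^k − y^{k−1}) and ‖x^{k+1} − x*(z^k)‖² ≤ ε²_{k+1}/σmax(B)². Then for all k ≥ 1: ‖x^{k+1} − x*‖² ≤ (2σmax(B)²/μx²)( (1 + β)‖y^k − y*‖ + β‖y^{k−1} − y*‖ )² + 2ε²_{k+1}/σmax(B)². -/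

import Mathlib

open scoped RealInnerProductSpace
open Matrix

/-- Action of a matrix on Euclidean space. -/
noncomputable def mulE {m n : ℕ} (B : Matrix (Fin m) (Fin n) ℝ)
    (x : EuclideanSpace ℝ (Fin n)) : EuclideanSpace ℝ (Fin m) :=
  Matrix.toEuclideanLin B x

/-- Largest singular value (operator norm) of a matrix. -/
noncomputable def sigmaMax {m n : ℕ} (B : Matrix (Fin m) (Fin n) ℝ) : ℝ :=
  ‖LinearMap.toContinuousLinearMap (Matrix.toEuclideanLin B)‖

/-- Largest eigenvalue of a symmetric matrix (Rayleigh quotient formulation). -/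
noncomputable def lambdaMax {n : ℕ} (P : Matrix (Fin n) (Fin n) ℝ) : ℝ :=
  ⨆ v : Metric.sphere (0 : EuclideanSpace ℝ (Fin n)) 1,
    ⟪mulE P (v : EuclideanSpace ℝ (Fin n)), (v : EuclideanSpace ℝ (Fin n))⟫

/-- Smallest eigenvalue of a symmetric matrix (Rayleigh quotient formulation). -/
noncomputable def lambdaMin {n : ℕ} (P : Matrix (Fin n) (Fin n) ℝ) : ℝ :=
  ⨅ v : Metric.sphere (0 : EuclideanSpace ℝ (Fin n)) 1,
    ⟪mulE P (v : EuclideanSpace ℝ (Fin n)), (v : EuclideanSpace ℝ (Fin n))⟫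

/-- `f` is `μ`-strongly convex: `f - μ/2 ‖·‖²` is convex. -/
def StrongConvex {n : ℕ} (μ : ℝ) (f : EuclideanSpace ℝ (Fin n) → ℝ) : Prop :=
  ConvexOn ℝ Set.univ fun x => f x - μ / 2 * ‖x‖ ^ 2

/-- A function with values in `ℝ ∪ {+∞}` (modelled by `EReal`) is proper. -/
def ProperER {n : ℕ} (f : EuclideanSpace ℝ (Fin n) → EReal) : Prop :=
  (∀ x, f x ≠ ⊥) ∧ ∃ x, f x ≠ ⊤

/-- Convexity for `EReal`-valued functions. -/
def ConvexER {n : ℕ} (f : EuclideanSpace ℝ (Fin n) → EReal) : Prop :=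
  ∀ x y : EuclideanSpace ℝ (Fin n), ∀ a b : ℝ, 0 ≤ a → 0 ≤ b → a + b = 1 →
    f (a • x + b • y) ≤ (a : EReal) * f x + (b : EReal) * f y

/-- `s` is a subgradient of the `EReal`-valued convex function `f` at `x`. -/
def IsSubgradAt {n : ℕ} (f : EuclideanSpace ℝ (Fin n) → EReal)
    (x s : EuclideanSpace ℝ (Fin n)) : Prop :=
  ∀ z, f x + ((⟪s, z - x⟫ : ℝ) : EReal) ≤ f z

/-- `p` is the proximal point `prox_{t g}(w)`, i.e. it minimizes `g(·) + 1/(2t)‖· - w‖²`. -/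
def IsProx {n : ℕ} (g : EuclideanSpace ℝ (Fin n) → EReal) (t : ℝ)
    (w p : EuclideanSpace ℝ (Fin n)) : Prop :=
  ∀ z, g p + ((1 / (2 * t) * ‖p - w‖ ^ 2 : ℝ) : EReal)
      ≤ g z + ((1 / (2 * t) * ‖z - w‖ ^ 2 : ℝ) : EReal)

section helpers

lemma inner_mulE_transpose {m n : ℕ} (B : Matrix (Fin m) (Fin n) ℝ)
    (v : EuclideanSpace ℝ (Fin m)) (x : EuclideanSpace ℝ (Fin n)) :
    ⟪mulE Bᵀ v, x⟫ = ⟪v, mulE B x⟫ := by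
  have h : Bᵀ = Bᴴ := (Matrix.conjTranspose_eq_transpose_of_trivial B).symm
  rw [mulE, mulE, h, Matrix.toEuclideanLin_conjTranspose_eq_adjoint,
    LinearMap.adjoint_inner_left]

lemma mulE_norm_le {m n : ℕ} (B : Matrix (Fin m) (Fin n) ℝ)
    (x : EuclideanSpace ℝ (Fin n)) : ‖mulE B x‖ ≤ sigmaMax B * ‖x‖ := by
  have := (LinearMap.toContinuousLinearMap (Matrix.toEuclideanLin B)).le_opNorm x
  simpa [mulE, sigmaMax] using this

lemma mulE_sub {m n : ℕ} (B : Matrix (Fin m) (Fin n) ℝ)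
    (x y : EuclideanSpace ℝ (Fin n)) : mulE B x - mulE B y = mulE B (x - y) := by
  simp [mulE, map_sub]

lemma convex_firstorder {n : ℕ} {f : EuclideanSpace ℝ (Fin n) → ℝ}
    (hconv : ConvexOn ℝ Set.univ f) {x g : EuclideanSpace ℝ (Fin n)}
    (hg : HasGradientAt f g x) (y : EuclideanSpace ℝ (Fin n)) :
    f x + ⟪g, y - x⟫ ≤ f y := by
  set v := y - x with hv
  set ψ : ℝ → ℝ := fun t => f (x + t • v) with hψ
  have hc : HasDerivAt (fun t : ℝ => x + t • v) v 0 := by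
    simpa using ((hasDerivAt_id (0 : ℝ)).smul_const v).const_add x
  have hψd : HasDerivAt ψ ⟪g, v⟫ 0 := by
    have h0 : (fun t : ℝ => x + t • v) 0 = x := by simp
    have := (h0 ▸ hg.hasFDerivAt).comp_hasDerivAt 0 hc
    simp only [InnerProductSpace.toDual_apply_apply] at this
    exact this
  have htend : Filter.Tendsto (slope ψ 0) (nhdsWithin 0 (Set.Ioi 0)) (nhds ⟪g, v⟫) := by
    have := hasDerivAt_iff_tendsto_slope.mp hψd
    exact this.mono_left (nhdsWithin_mono _ (fun t ht => ne_of_gt ht))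
  have hbound : ∀ᶠ t in nhdsWithin 0 (Set.Ioi 0), slope ψ 0 t ≤ f y - f x := by
    filter_upwards [Ioo_mem_nhdsGT_of_mem (Set.left_mem_Ico.mpr one_pos)] with t ht
    have ht0 : (0:ℝ) < t := ht.1
    have ht1 : t < 1 := ht.2
    have hcomb : x + t • v = (1 - t) • x + t • y := by
      rw [hv]; rw [smul_sub, sub_smul, one_smul]; abel
    have hcvx := hconv.2 (Set.mem_univ x) (Set.mem_univ y)
      (by linarith : (0:ℝ) ≤ 1 - t) (le_of_lt ht0) (by ring)
    have hψt : ψ t ≤ (1 - t) * f x + t * f y := by rw [hψ]; simp only; rw [hcomb]; exact hcvx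
    have hψ0 : ψ 0 = f x := by simp [hψ]
    rw [slope_def_field, hψ0]
    rw [sub_zero, div_le_iff₀ ht0]
    nlinarith
  have := le_of_tendsto htend hbound
  linarith [this]

lemma sc_combo {n : ℕ} {μ : ℝ} {f : EuclideanSpace ℝ (Fin n) → ℝ}
    (h : StrongConvex μ f) (p q : EuclideanSpace ℝ (Fin n)) {a b : ℝ}
    (ha : 0 ≤ a) (hb : 0 ≤ b) (hab : a + b = 1) :
    f (a • p + b • q) ≤ a * f p + b * f q - μ / 2 * (a * b * ‖p - q‖ ^ 2) := by
  have hcvx := h.2 (Set.mem_univ p) (Set.mem_univ q) ha hb hab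
  simp only [smul_eq_mul] at hcvx
  have hid : a * ‖p‖ ^ 2 + b * ‖q‖ ^ 2 - ‖a • p + b • q‖ ^ 2 = a * b * ‖p - q‖ ^ 2 := by
    have e1 : ‖a • p + b • q‖ ^ 2 = ⟪a • p + b • q, a • p + b • q⟫ :=
      (real_inner_self_eq_norm_sq _).symm
    have e2 : ‖p - q‖ ^ 2 = ⟪p - q, p - q⟫ := (real_inner_self_eq_norm_sq _).symm
    have e3 : ‖p‖ ^ 2 = ⟪p, p⟫ := (real_inner_self_eq_norm_sq _).symm
    have e4 : ‖q‖ ^ 2 = ⟪q, q⟫ := (real_inner_self_eq_norm_sq _).symm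
    rw [e1, e2, e3, e4]
    simp only [inner_add_add_self, inner_sub_sub_self, real_inner_smul_left,
      real_inner_smul_right, real_inner_comm p q]
    have hb1 : b = 1 - a := by linarith
    rw [hb1]; ring
  have h2 := congrArg (fun t => μ / 2 * t) hid
  nlinarith [h2, hcvx]

lemma quad_growth {n : ℕ} {μ : ℝ} (hμ : 0 < μ)
    {f1 : EuclideanSpace ℝ (Fin n) → ℝ} (hsc : StrongConvex μ f1)
    {f2 : EuclideanSpace ℝ (Fin n) → EReal} (hconv : ConvexER f2) (hbot : ∀ p, f2 p ≠ ⊥)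
    (b u : EuclideanSpace ℝ (Fin n))
    (hmin : ∀ p, (f1 u : EReal) + f2 u + ((⟪b, u⟫ : ℝ) : EReal)
        ≤ (f1 p : EReal) + f2 p + ((⟪b, p⟫ : ℝ) : EReal))
    (hut : f2 u ≠ ⊤) (x : EuclideanSpace ℝ (Fin n)) (hxt : f2 x ≠ ⊤) :
    f1 u + (f2 u).toReal + ⟪b, u⟫ + μ / 2 * ‖x - u‖ ^ 2
      ≤ f1 x + (f2 x).toReal + ⟪b, x⟫ := by
  set Fr : EuclideanSpace ℝ (Fin n) → ℝ := fun p => f1 p + (f2 p).toReal + ⟪b, p⟫ with hFr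
  have hminR : ∀ p, f2 p ≠ ⊤ → Fr u ≤ Fr p := by
    intro p hpt
    have h := hmin p
    rw [← EReal.coe_toReal hut (hbot u), ← EReal.coe_toReal hpt (hbot p)] at h
    rw [← EReal.coe_add, ← EReal.coe_add, ← EReal.coe_add, ← EReal.coe_add] at h
    exact_mod_cast h
  have hmid : ∀ p q : EuclideanSpace ℝ (Fin n), f2 p ≠ ⊤ → f2 q ≠ ⊤ →
      f2 ((1/2 : ℝ) • p + (1/2 : ℝ) • q) ≠ ⊤ ∧
      Fr ((1/2 : ℝ) • p + (1/2 : ℝ) • q) ≤ (Fr p + Fr q) / 2 - μ / 8 * ‖p - q‖ ^ 2 := by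
    intro p q hpt hqt
    set m := (1/2 : ℝ) • p + (1/2 : ℝ) • q with hm
    have hf2m := hconv p q (1/2) (1/2) (by norm_num) (by norm_num) (by norm_num)
    rw [← EReal.coe_toReal hpt (hbot p), ← EReal.coe_toReal hqt (hbot q)] at hf2m
    rw [← EReal.coe_mul, ← EReal.coe_mul, ← EReal.coe_add] at hf2m
    have hmt : f2 m ≠ ⊤ := by
      intro h; rw [h] at hf2m; exact (EReal.coe_ne_top _) (top_le_iff.mp hf2m)
    have hf2mR : (f2 m).toReal ≤ 1/2 * (f2 p).toReal + 1/2 * (f2 q).toReal := by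
      rw [← EReal.coe_toReal hmt (hbot m)] at hf2m
      exact_mod_cast hf2m
    have hf1m := sc_combo hsc p q (a := 1/2) (b := 1/2) (by norm_num) (by norm_num)
      (by norm_num)
    have hinner : ⟪b, m⟫ = 1/2 * ⟪b, p⟫ + 1/2 * ⟪b, q⟫ := by
      rw [hm, inner_add_right, real_inner_smul_right, real_inner_smul_right]
    refine ⟨hmt, ?_⟩
    simp only [hFr]
    rw [hinner]
    nlinarith [hf1m, hf2mR]
  have hind : ∀ N : ℕ, ∀ p, f2 p ≠ ⊤ →
      Fr u + μ / 2 * (1 - (1/2 : ℝ) ^ N) * ‖p - u‖ ^ 2 ≤ Fr p := by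
    intro N
    induction N with
    | zero => intro p hpt; simpa using hminR p hpt
    | succ N ih =>
      intro p hpt
      set m := (1/2 : ℝ) • u + (1/2 : ℝ) • p with hm
      obtain ⟨hmt, hFm⟩ := hmid u p hut hpt
      have hmu : ‖m - u‖ ^ 2 = ‖p - u‖ ^ 2 / 4 := by
        have : m - u = (1/2 : ℝ) • (p - u) := by
          rw [hm]; rw [smul_sub]; module
        rw [this, norm_smul]
        simp [mul_pow]
        ring
      have hih := ih m hmt
      rw [hmu] at hih
      have h2 : Fr u + μ / 2 * (1 - (1/2 : ℝ) ^ N) * (‖p - u‖ ^ 2 / 4)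
          ≤ (Fr u + Fr p) / 2 - μ / 8 * ‖u - p‖ ^ 2 := le_trans hih hFm
      have hnorm : ‖u - p‖ = ‖p - u‖ := norm_sub_rev u p
      rw [hnorm] at h2
      have hpow : ((1:ℝ)/2) ^ (N + 1) = (1/2) ^ N / 2 := by ring
      rw [hpow]
      nlinarith [h2]
  have htends : Filter.Tendsto
      (fun N : ℕ => Fr u + μ / 2 * (1 - (1/2 : ℝ) ^ N) * ‖x - u‖ ^ 2) Filter.atTop
      (nhds (Fr u + μ / 2 * (1 - 0) * ‖x - u‖ ^ 2)) := by
    have h0 : Filter.Tendsto (fun N : ℕ => ((1:ℝ)/2) ^ N) Filter.atTop (nhds 0) :=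
      tendsto_pow_atTop_nhds_zero_of_lt_one (by norm_num) (by norm_num)
    exact (((tendsto_const_nhds.sub h0).const_mul _).mul_const _).const_add _
  have hfin : Fr u + μ / 2 * (1 - 0) * ‖x - u‖ ^ 2 ≤ Fr x :=
    le_of_tendsto htends (Filter.Eventually.of_forall (fun N => hind N x hxt))
  simp only [hFr] at hfin
  linarith [hfin]

lemma hasGradient_shift {n : ℕ} (μ : ℝ) {f : EuclideanSpace ℝ (Fin n) → ℝ}
    {g x : EuclideanSpace ℝ (Fin n)} (hf : HasGradientAt f g x) :
    HasGradientAt (fun y => f y - μ / 2 * ‖y‖ ^ 2) (g - μ • x) x := by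
  rw [hasGradientAt_iff_hasFDerivAt]
  have hsq : HasFDerivAt (fun y : EuclideanSpace ℝ (Fin n) => μ / 2 * ‖y‖ ^ 2)
      ((μ / 2) • (2 • (innerSL ℝ x))) x :=
    ((hasStrictFDerivAt_norm_sq x).hasFDerivAt).const_mul (μ / 2)
  have := (hasGradientAt_iff_hasFDerivAt.mp hf).sub hsq
  refine HasFDerivAt.congr_fderiv this ?_
  ext v
  simp [inner_sub_left, real_inner_smul_left]
  ring

lemma normsq_convex {n : ℕ} (c : ℝ) (hc : 0 ≤ c) :
    ConvexOn ℝ Set.univ (fun x : EuclideanSpace ℝ (Fin n) => c * ‖x‖ ^ 2) := by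
  refine ⟨convex_univ, ?_⟩
  intro p _ q _ a b ha hb hab
  simp only [smul_eq_mul]
  have htri : ‖a • p + b • q‖ ≤ a * ‖p‖ + b * ‖q‖ := by
    calc ‖a • p + b • q‖ ≤ ‖a • p‖ + ‖b • q‖ := norm_add_le _ _
    _ = a * ‖p‖ + b * ‖q‖ := by rw [norm_smul, norm_smul]; simp [abs_of_nonneg ha, abs_of_nonneg hb, Real.norm_eq_abs]
  have h0 : (0:ℝ) ≤ ‖a • p + b • q‖ := norm_nonneg _
  have h1 : ‖a • p + b • q‖ ^ 2 ≤ (a * ‖p‖ + b * ‖q‖) ^ 2 := pow_le_pow_left₀ h0 htri 2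
  have h2 : (a * ‖p‖ + b * ‖q‖) ^ 2 ≤ a * ‖p‖ ^ 2 + b * ‖q‖ ^ 2 := by
    nlinarith [mul_nonneg (mul_nonneg ha hb) (sq_nonneg (‖p‖ - ‖q‖))]
  have h3 := mul_le_mul_of_nonneg_left (le_trans h1 h2) hc
  nlinarith [h3]

end helpers

set_option maxHeartbeats 1000000

/-- primal error bound for iDAPG. -/
theorem idapg_primal_error_bound {dx dy : ℕ} (μx Lx Ly μφ : ℝ)
    (hμx : 0 < μx) (hLx : μx ≤ Lx) (hLy : 0 ≤ Ly) (hμφ : 0 < μφ)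
    (f1 : EuclideanSpace ℝ (Fin dx) → ℝ)
    (f1' : EuclideanSpace ℝ (Fin dx) → EuclideanSpace ℝ (Fin dx))
    (hf1grad : ∀ x, HasGradientAt f1 (f1' x) x)
    (hf1sc : StrongConvex μx f1)
    (hf1sm : ∀ x x', ‖f1' x - f1' x'‖ ≤ Lx * ‖x - x'‖)
    (g1 : EuclideanSpace ℝ (Fin dy) → ℝ)
    (g1' : EuclideanSpace ℝ (Fin dy) → EuclideanSpace ℝ (Fin dy))
    (hg1grad : ∀ y, HasGradientAt g1 (g1' y) y)
    (hg1conv : ConvexOn ℝ Set.univ g1)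
    (hg1sm : ∀ y y', ‖g1' y - g1' y'‖ ≤ Ly * ‖y - y'‖)
    (f2 : EuclideanSpace ℝ (Fin dx) → EReal)
    (hf2prop : ProperER f2) (hf2conv : ConvexER f2) (hf2lsc : LowerSemicontinuous f2)
    (g2 : EuclideanSpace ℝ (Fin dy) → EReal)
    (hg2prop : ProperER g2) (hg2conv : ConvexER g2) (hg2lsc : LowerSemicontinuous g2)
    (B : Matrix (Fin dy) (Fin dx) ℝ) (hB : 0 < sigmaMax B)
    (xstar : EuclideanSpace ℝ (Fin dy) → EuclideanSpace ℝ (Fin dx))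
    (hxstar : ∀ y x, (f1 (xstar y) : EReal) + f2 (xstar y) + ((⟪mulE Bᵀ y, xstar y⟫ : ℝ) : EReal)
        ≤ (f1 x : EReal) + f2 x + ((⟪mulE Bᵀ y, x⟫ : ℝ) : EReal))
    -- the dual function φ, its gradient and strong convexity
    (φ : EuclideanSpace ℝ (Fin dy) → ℝ)
    (hφgrad : ∀ y, HasGradientAt φ (g1' y - mulE B (xstar y)) y)
    (hφsc : StrongConvex μφ φ)
    (κφ β : ℝ)
    (hκφ : κφ = (sigmaMax B ^ 2 / μx + Ly) / μφ)
    (hβ : β = (Real.sqrt κφ - 1) / (Real.sqrt κφ + 1))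
    -- the saddle point (x*, y*)
    (xs : EuclideanSpace ℝ (Fin dx)) (ys : EuclideanSpace ℝ (Fin dy))
    (hsadx : IsSubgradAt f2 xs (-mulE Bᵀ ys - f1' xs))
    (hsady : IsSubgradAt g2 ys (mulE B xs - g1' ys))
    -- the iterates
    (x : ℕ → EuclideanSpace ℝ (Fin dx))
    (y z : ℕ → EuclideanSpace ℝ (Fin dy)) (ε : ℕ → ℝ)
    (hz : ∀ k, 1 ≤ k → z k = y k + β • (y k - y (k - 1)))
    (herr : ∀ k, ‖x (k + 1) - xstar (z k)‖ ^ 2 ≤ ε (k + 1) ^ 2 / sigmaMax B ^ 2) :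
    ∀ k : ℕ, 1 ≤ k →
      ‖x (k + 1) - xs‖ ^ 2 ≤
        (2 * sigmaMax B ^ 2 / μx ^ 2) *
          ((1 + β) * ‖y k - ys‖ + β * ‖y (k - 1) - ys‖) ^ 2 +
        2 * ε (k + 1) ^ 2 / sigmaMax B ^ 2 := by
  have hbot := hf2prop.1
  obtain ⟨x0, hx0⟩ := hf2prop.2
  set σ := sigmaMax B with hσ
  -- f2 is finite at every xstar y
  have hfinxstar : ∀ yy, f2 (xstar yy) ≠ ⊤ := by
    intro yy h
    have h1 := hxstar yy x0
    rw [h, ← EReal.coe_toReal hx0 (hbot x0)] at h1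
    rw [← EReal.coe_add, ← EReal.coe_add] at h1
    rw [EReal.add_top_of_ne_bot (EReal.coe_ne_bot _), EReal.top_add_coe] at h1
    exact (EReal.coe_ne_top _) (top_le_iff.mp h1)
  -- f2 is finite at xs
  have hxst : f2 xs ≠ ⊤ := by
    intro h
    have h1 := hsadx x0
    rw [h, EReal.top_add_coe] at h1
    rw [← EReal.coe_toReal hx0 (hbot x0)] at h1
    exact (EReal.coe_ne_top _) (top_le_iff.mp h1)
  -- f1 is convex
  have hf1conv : ConvexOn ℝ Set.univ f1 := by
    have h2 := hf1sc.add (normsq_convex (μx / 2) (by linarith))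
    have h3 : f1 = ((fun xx : EuclideanSpace ℝ (Fin dx) => f1 xx - μx / 2 * ‖xx‖ ^ 2)
        + fun xx => μx / 2 * ‖xx‖ ^ 2) := by
      funext xx; simp only [Pi.add_apply]; ring
    rw [h3]; exact h2
  -- xs minimizes f1 + f2 + ⟪Bᵀ ys, ·⟫
  have hminxs : ∀ p, (f1 xs : EReal) + f2 xs + ((⟪mulE Bᵀ ys, xs⟫ : ℝ) : EReal)
      ≤ (f1 p : EReal) + f2 p + ((⟪mulE Bᵀ ys, p⟫ : ℝ) : EReal) := by
    intro p
    by_cases hpt : f2 p = ⊤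
    · rw [hpt, EReal.add_top_of_ne_bot (EReal.coe_ne_bot _), EReal.top_add_coe]
      exact le_top
    · have hsub := hsadx p
      rw [← EReal.coe_toReal hxst (hbot xs), ← EReal.coe_toReal hpt (hbot p)] at hsub ⊢
      rw [← EReal.coe_add] at hsub
      have hsubR : (f2 xs).toReal + ⟪-mulE Bᵀ ys - f1' xs, p - xs⟫ ≤ (f2 p).toReal := by
        exact_mod_cast hsub
      have hfo := convex_firstorder hf1conv (hf1grad xs) p
      rw [← EReal.coe_add, ← EReal.coe_add, ← EReal.coe_add, ← EReal.coe_add]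
      rw [EReal.coe_le_coe_iff]
      have hexp : ⟪-mulE Bᵀ ys - f1' xs, p - xs⟫
          = -⟪mulE Bᵀ ys, p⟫ + ⟪mulE Bᵀ ys, xs⟫ - ⟪f1' xs, p - xs⟫ := by
        rw [inner_sub_left, inner_neg_left, inner_sub_right, inner_sub_right]
        ring
      rw [hexp] at hsubR
      linarith [hsubR, hfo]
  -- pairwise Lipschitz-type bound for minimizers
  have hLip : ∀ (w w' : EuclideanSpace ℝ (Fin dy)) (u u' : EuclideanSpace ℝ (Fin dx)),
      (∀ p, (f1 u : EReal) + f2 u + ((⟪mulE Bᵀ w, u⟫ : ℝ) : EReal)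
        ≤ (f1 p : EReal) + f2 p + ((⟪mulE Bᵀ w, p⟫ : ℝ) : EReal)) → f2 u ≠ ⊤ →
      (∀ p, (f1 u' : EReal) + f2 u' + ((⟪mulE Bᵀ w', u'⟫ : ℝ) : EReal)
        ≤ (f1 p : EReal) + f2 p + ((⟪mulE Bᵀ w', p⟫ : ℝ) : EReal)) → f2 u' ≠ ⊤ →
      ‖u - u'‖ ≤ σ / μx * ‖w - w'‖ := by
    intro w w' u u' hminu hut hminu' hu't
    have g1h := quad_growth hμx hf1sc hf2conv hbot (mulE Bᵀ w) u hminu hut u' hu't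
    have g2h := quad_growth hμx hf1sc hf2conv hbot (mulE Bᵀ w') u' hminu' hu't u hut
    rw [norm_sub_rev u' u] at g1h
    have hsum : μx * ‖u - u'‖ ^ 2 ≤ ⟪mulE Bᵀ w - mulE Bᵀ w', u' - u⟫ := by
      rw [inner_sub_left, inner_sub_right, inner_sub_right]
      linarith [g1h, g2h]
    rw [mulE_sub, inner_mulE_transpose] at hsum
    have hub : ⟪w - w', mulE B (u' - u)⟫ ≤ ‖w - w'‖ * (σ * ‖u' - u‖) := by
      calc ⟪w - w', mulE B (u' - u)⟫ ≤ ‖w - w'‖ * ‖mulE B (u' - u)‖ :=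
            real_inner_le_norm _ _
        _ ≤ ‖w - w'‖ * (σ * ‖u' - u‖) :=
            mul_le_mul_of_nonneg_left (mulE_norm_le B _) (norm_nonneg _)
    rw [norm_sub_rev u' u] at hub
    rcases eq_or_lt_of_le (norm_nonneg (u - u')) with h0 | h0
    · rw [← h0]
      positivity
    · have := le_trans hsum hub
      rw [div_mul_eq_mul_div, le_div_iff₀ hμx]
      nlinarith [this, h0]
  have hxstarLip : ∀ w w', ‖xstar w - xstar w'‖ ≤ σ / μx * ‖w - w'‖ := by
    intro w w'
    exact hLip w w' _ _ (hxstar w) (hfinxstar w) (hxstar w') (hfinxstar w')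
  -- β is nonnegative (unless dy = 0)
  have hβnn : dy = 0 ∨ 0 ≤ β := by
    by_cases hdy : dy = 0
    · exact Or.inl hdy
    · right
      set e : EuclideanSpace ℝ (Fin dy) :=
        EuclideanSpace.single (⟨0, Nat.pos_of_ne_zero hdy⟩ : Fin dy) (1 : ℝ) with he
      have hne : ‖e‖ = 1 := by rw [he, EuclideanSpace.norm_single]; norm_num
      set G : EuclideanSpace ℝ (Fin dy) → EuclideanSpace ℝ (Fin dy) :=
        fun yy => g1' yy - mulE B (xstar yy) with hG
      have hA := convex_firstorder hφsc (hasGradient_shift μφ (hφgrad e)) 0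
      have hB2 := convex_firstorder hφsc (hasGradient_shift μφ (hφgrad 0)) e
      have hmono : μφ * ‖e‖ ^ 2 ≤ ⟪G e - G 0, e⟫ := by
        simp only [hG]
        simp only [inner_sub_left, inner_sub_right, real_inner_smul_left,
          sub_zero, zero_sub, inner_neg_right, smul_zero, inner_zero_left,
          real_inner_self_eq_norm_sq] at hA hB2 ⊢
        nlinarith [hA, hB2]
      have hGe : ‖G e - G 0‖ ≤ Ly + σ * (σ / μx) := by
        have hre : G e - G 0 = (g1' e - g1' 0) - (mulE B (xstar e) - mulE B (xstar 0)) := by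
          simp only [hG]; abel
        rw [hre]
        calc ‖(g1' e - g1' 0) - (mulE B (xstar e) - mulE B (xstar 0))‖
            ≤ ‖g1' e - g1' 0‖ + ‖mulE B (xstar e) - mulE B (xstar 0)‖ := norm_sub_le _ _
          _ ≤ Ly + σ * (σ / μx) := by
              have h1 := hg1sm e 0
              have h2 : ‖mulE B (xstar e) - mulE B (xstar 0)‖ ≤ σ * (σ / μx) := by
                rw [mulE_sub]
                calc ‖mulE B (xstar e - xstar 0)‖ ≤ σ * ‖xstar e - xstar 0‖ :=
                      mulE_norm_le B _
                  _ ≤ σ * (σ / μx) := by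
                      have := hxstarLip e 0
                      rw [sub_zero, hne] at this
                      have := mul_le_mul_of_nonneg_left (by simpa using this) (le_of_lt hB)
                      simpa using this
              rw [sub_zero, hne] at h1
              simp only [mul_one] at h1
              linarith
      have hμφle : μφ ≤ Ly + σ ^ 2 / μx := by
        have h3 : ⟪G e - G 0, e⟫ ≤ ‖G e - G 0‖ * ‖e‖ := real_inner_le_norm _ _
        rw [hne] at h3 hmono
        have : σ * (σ / μx) = σ ^ 2 / μx := by ring
        nlinarith [hmono, h3, hGe]
      have hκ1 : 1 ≤ κφ := by
        rw [hκφ, le_div_iff₀ hμφ]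
        rw [← hσ] at *
        linarith
      have hs1 : 1 ≤ Real.sqrt κφ := Real.one_le_sqrt.mpr hκ1
      rw [hβ]
      apply div_nonneg <;> linarith
  -- main estimate
  intro k hk
  set u := xstar (z k) with hu
  have h3 : ‖u - xs‖ ≤ σ / μx * ‖z k - ys‖ :=
    hLip (z k) ys u xs (hxstar (z k)) (hfinxstar (z k)) hminxs hxst
  have hMbound : ‖z k - ys‖ ≤ (1 + β) * ‖y k - ys‖ + β * ‖y (k - 1) - ys‖ := by
    rcases hβnn with hdy | hbpos
    · subst hdy
      haveI : Subsingleton (EuclideanSpace ℝ (Fin 0)) :=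
        ⟨fun a b => PiLp.ext fun i => Fin.elim0 i⟩
      have e1 : z k - ys = 0 := Subsingleton.elim _ _
      have e2 : y k - ys = 0 := Subsingleton.elim _ _
      have e3 : y (k - 1) - ys = 0 := Subsingleton.elim _ _
      rw [e1, e2, e3, norm_zero]
      simp
    · have hzz : z k - ys = (y k - ys) + β • ((y k - ys) - (y (k - 1) - ys)) := by
        rw [hz k hk]; module
      rw [hzz]
      calc ‖(y k - ys) + β • ((y k - ys) - (y (k - 1) - ys))‖
          ≤ ‖y k - ys‖ + ‖β • ((y k - ys) - (y (k - 1) - ys))‖ := norm_add_le _ _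
        _ ≤ ‖y k - ys‖ + β * (‖y k - ys‖ + ‖y (k - 1) - ys‖) := by
            rw [norm_smul, Real.norm_eq_abs, abs_of_nonneg hbpos]
            have := norm_sub_le (y k - ys) (y (k - 1) - ys)
            nlinarith [this]
        _ = (1 + β) * ‖y k - ys‖ + β * ‖y (k - 1) - ys‖ := by ring
  have h2 := herr k
  have htri : ‖x (k + 1) - xs‖ ≤ ‖x (k + 1) - u‖ + ‖u - xs‖ := by
    have := dist_triangle (x (k + 1)) u xs
    simpa [dist_eq_norm] using this
  set M := (1 + β) * ‖y k - ys‖ + β * ‖y (k - 1) - ys‖ with hM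
  have hMnn : 0 ≤ M := le_trans (norm_nonneg _) hMbound
  have hq : ‖u - xs‖ ≤ σ / μx * M := by
    refine le_trans h3 ?_
    exact mul_le_mul_of_nonneg_left hMbound (by positivity)
  have hq2 : ‖u - xs‖ ^ 2 ≤ (σ / μx * M) ^ 2 := pow_le_pow_left₀ (norm_nonneg _) hq 2
  have hs2 : ‖x (k + 1) - xs‖ ^ 2 ≤ 2 * ‖x (k + 1) - u‖ ^ 2 + 2 * ‖u - xs‖ ^ 2 := by
    nlinarith [htri, norm_nonneg (x (k + 1) - xs), norm_nonneg (x (k + 1) - u),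
      norm_nonneg (u - xs), sq_nonneg (‖x (k + 1) - u‖ - ‖u - xs‖)]
  have hid : 2 * (σ / μx * M) ^ 2 = 2 * σ ^ 2 / μx ^ 2 * M ^ 2 := by
    field_simp
  have h2' : ‖x (k + 1) - u‖ ^ 2 ≤ ε (k + 1) ^ 2 / σ ^ 2 := h2

  calc ‖x (k + 1) - xs‖ ^ 2 ≤ 2 * ‖x (k + 1) - u‖ ^ 2 + 2 * ‖u - xs‖ ^ 2 := hs2
    _ ≤ 2 * (ε (k + 1) ^ 2 / σ ^ 2) + 2 * (σ / μx * M) ^ 2 := by linarith [h2', hq2]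
    _ = 2 * σ ^ 2 / μx ^ 2 * M ^ 2 + 2 * ε (k + 1) ^ 2 / σ ^ 2 := by
        rw [hid]; ring
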